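/- Let H be a directed graph, L a nonempty directed graph, D an arc-weighted directed multigraph with weight function w, and c an optimal fractional H-cover of D. Suppose α > 0 and there is an arc e with c(e) ≥ α. If τ_H(D \ e) ≤ α⁻¹ ν*_H(D \ e), then τ_H(D) ≤ α⁻¹ ν*_H(D). -/

import Mathlib

/-! An arc-weighted directed multigraph `D` is given by a vertex type `V`, an arc
index type `ι` with endpoint maps `src, dst : ι → V`, an active arc set
`E : Finset ι` and a weight function `w : ι → ℝ`. The directed graph `H` is given
by a vertex type `W` and arc set `HA : Finset (W × W)`. Deleting an arc `e`
corresponds to replacing `E` by `E.erase e`. -/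

/-- A copy of `H` in the multigraph, given by a vertex embedding `φ` and an
arc selection `ψ` (injective on the arcs of `H`) with matching endpoints. -/
def IsHCopy {V ι W : Type} (HA : Finset (W × W)) (src dst : ι → V) (E : Finset ι)
    (φ : W → V) (ψ : W × W → ι) : Prop :=
  Function.Injective φ ∧ Set.InjOn ψ ↑HA ∧
    ∀ a ∈ HA, ψ a ∈ E ∧ src (ψ a) = φ a.1 ∧ dst (ψ a) = φ a.2

/-- A fractional `H`-cover: `c : E → [0,1]` with total value at least `1` on the
arcs of every `H`-copy. -/
def IsFracCover {V ι W : Type} (HA : Finset (W × W)) (src dst : ι → V) (E : Finset ι)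
    (c : ι → ℝ) : Prop :=
  (∀ i, 0 ≤ c i ∧ c i ≤ 1) ∧
    ∀ φ ψ, IsHCopy HA src dst E φ ψ → 1 ≤ ∑ a ∈ HA, c (ψ a)

/-- The value of a fractional cover: `Σ_e w(e) c(e)`. -/
def coverValue {ι : Type} (E : Finset ι) (w c : ι → ℝ) : ℝ := ∑ i ∈ E, w i * c i

open Classical in
/-- A fractional `H`-packing: a nonnegative weighting of the `H`-copies such that
for every arc the total weight of the copies through it is at most the arc weight. -/
noncomputable def IsFracPacking {V ι W : Type} [Fintype V] [Fintype ι] [Fintype W]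
    [DecidableEq W] (HA : Finset (W × W)) (src dst : ι → V) (E : Finset ι)
    (w : ι → ℝ) (m : (W → V) × (W × W → ι) → ℝ) : Prop :=
  (∀ p, 0 ≤ m p) ∧
  (∀ p, ¬ IsHCopy HA src dst E p.1 p.2 → m p = 0) ∧
  ∀ i ∈ E, (∑ p : (W → V) × (W × W → ι),
      if ∃ a ∈ HA, p.2 a = i then m p else 0) ≤ w i

/-- The value of a fractional packing. -/
noncomputable def packingValue {V ι W : Type} [Fintype V] [Fintype ι] [Fintype W]
    [DecidableEq W] (m : (W → V) × (W × W → ι) → ℝ) : ℝ := ∑ p, m p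

/-- `F` is an `H`-cover (meets every copy of `H`). -/
def IsCoverSet {V ι W : Type} (HA : Finset (W × W)) (src dst : ι → V) (E : Finset ι)
    (F : Finset ι) : Prop :=
  ∀ φ ψ, IsHCopy HA src dst E φ ψ → ∃ a ∈ HA, ψ a ∈ F


open Finset
open scoped InnerProductSpace


section setup
variable {P ι : Type} [Fintype P] [Fintype ι]

-- column data: Cp : copies, U : uses arc
variable (Cp : P → Prop) (U : P → ι → Prop) [∀ p, Decidable (Cp p)] [∀ p i, Decidable (U p i)]

noncomputable def flin (Cp : P → Prop) (U : P → ι → Prop) [∀ p, Decidable (Cp p)]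
    [∀ p i, Decidable (U p i)] :
    EuclideanSpace ℝ ((P ⊕ ι) ⊕ Unit) →ₗ[ℝ] EuclideanSpace ℝ (ι ⊕ Unit) where
  toFun x := WithLp.toLp 2 (fun r => Sum.rec
      (fun i => (∑ p : P, if Cp p ∧ U p i then x (Sum.inl (Sum.inl p)) else 0)
        + x (Sum.inl (Sum.inr i)))
      (fun _ => (∑ p : P, if Cp p then x (Sum.inl (Sum.inl p)) else 0) - x (Sum.inr ())) r)
  map_add' x y := by
    ext r
    cases r with
    | inl i =>
      show (∑ p : P, if Cp p ∧ U p i then (x + y) (Sum.inl (Sum.inl p)) else 0)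
          + (x + y) (Sum.inl (Sum.inr i)) = _
      have : ∀ p : P, (if Cp p ∧ U p i then (x + y) (Sum.inl (Sum.inl p)) else 0)
          = (if Cp p ∧ U p i then x (Sum.inl (Sum.inl p)) else 0)
            + (if Cp p ∧ U p i then y (Sum.inl (Sum.inl p)) else 0) := by
        intro p; split_ifs with h
        · simp [PiLp.add_apply]
        · simp
      rw [Finset.sum_congr rfl fun p _ => this p, Finset.sum_add_distrib]
      show _ = ((∑ p : P, if Cp p ∧ U p i then x (Sum.inl (Sum.inl p)) else 0)
          + x (Sum.inl (Sum.inr i)))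
          + ((∑ p : P, if Cp p ∧ U p i then y (Sum.inl (Sum.inl p)) else 0)
          + y (Sum.inl (Sum.inr i)))
      simp [PiLp.add_apply]; ring
    | inr u =>
      show (∑ p : P, if Cp p then (x + y) (Sum.inl (Sum.inl p)) else 0) - (x + y) (Sum.inr ()) = _
      have : ∀ p : P, (if Cp p then (x + y) (Sum.inl (Sum.inl p)) else 0)
          = (if Cp p then x (Sum.inl (Sum.inl p)) else 0)
            + (if Cp p then y (Sum.inl (Sum.inl p)) else 0) := by
        intro p; split_ifs with h
        · simp [PiLp.add_apply]
        · simp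
      rw [Finset.sum_congr rfl fun p _ => this p, Finset.sum_add_distrib]
      show _ = ((∑ p : P, if Cp p then x (Sum.inl (Sum.inl p)) else 0) - x (Sum.inr ()))
          + ((∑ p : P, if Cp p then y (Sum.inl (Sum.inl p)) else 0) - y (Sum.inr ()))
      simp [PiLp.add_apply]; ring
  map_smul' r x := by
    ext rr
    cases rr with
    | inl i =>
      show (∑ p : P, if Cp p ∧ U p i then (r • x) (Sum.inl (Sum.inl p)) else 0)
          + (r • x) (Sum.inl (Sum.inr i)) = _
      have : ∀ p : P, (if Cp p ∧ U p i then (r • x) (Sum.inl (Sum.inl p)) else 0)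
          = r * (if Cp p ∧ U p i then x (Sum.inl (Sum.inl p)) else 0) := by
        intro p; split_ifs with h
        · simp [PiLp.smul_apply, smul_eq_mul]
        · simp
      rw [Finset.sum_congr rfl fun p _ => this p, ← Finset.mul_sum]
      show _ = r • ((∑ p : P, if Cp p ∧ U p i then x (Sum.inl (Sum.inl p)) else 0)
          + x (Sum.inl (Sum.inr i)))
      simp [PiLp.smul_apply, smul_eq_mul]; ring
    | inr u =>
      show (∑ p : P, if Cp p then (r • x) (Sum.inl (Sum.inl p)) else 0) - (r • x) (Sum.inr ()) = _
      have : ∀ p : P, (if Cp p then (r • x) (Sum.inl (Sum.inl p)) else 0)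
          = r * (if Cp p then x (Sum.inl (Sum.inl p)) else 0) := by
        intro p; split_ifs with h
        · simp [PiLp.smul_apply, smul_eq_mul]
        · simp
      rw [Finset.sum_congr rfl fun p _ => this p, ← Finset.mul_sum]
      show _ = r • ((∑ p : P, if Cp p then x (Sum.inl (Sum.inl p)) else 0) - x (Sum.inr ()))
      simp [PiLp.smul_apply, smul_eq_mul]; ring

noncomputable def orthant (J : Type) [Fintype J] : ProperCone ℝ (EuclideanSpace ℝ J) where
  toSubmodule :=
  { carrier := {x : EuclideanSpace ℝ J | ∀ j, 0 ≤ x j}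
    add_mem' := fun {x y} hx hy j => by
      have := add_nonneg (hx j) (hy j)
      simpa [PiLp.add_apply] using this
    zero_mem' := fun j => le_of_eq (by simp)
    smul_mem' := fun r x hx j => by
      have : (r • x) j = (r : ℝ) * x j := rfl
      rw [this]
      exact mul_nonneg r.2 (hx j) }
  isClosed' := by
    have : {x : EuclideanSpace ℝ J | ∀ j, 0 ≤ x j} = ⋂ j, {x : EuclideanSpace ℝ J | 0 ≤ x j} := by
      ext x; simp [Set.mem_iInter]
    show IsClosed {x : EuclideanSpace ℝ J | ∀ j, 0 ≤ x j}
    rw [this]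
    refine isClosed_iInter fun j => isClosed_le continuous_const ?_
    exact (continuous_apply j).comp (PiLp.continuous_ofLp 2 (fun _ : J => ℝ))

lemma mem_orthant {J : Type} [Fintype J] (x : EuclideanSpace ℝ J) :
    x ∈ orthant J ↔ ∀ j, 0 ≤ x j := Iff.rfl

end setup
open Finset
open scoped InnerProductSpace

lemma real_inner_eq_sum {n : Type} [Fintype n] (x y : EuclideanSpace ℝ n) :
    ⟪x, y⟫_ℝ = ∑ i, x i * y i := by
  simp [PiLp.inner_apply, RCLike.inner_apply, conj_trivial, mul_comm]

lemma sum_ite_single {P : Type} [Fintype P] [DecidableEq P] (C : P → Prop) [∀ p, Decidable (C p)]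
    (p0 : P) (v : ℝ) :
    (∑ p, if C p then (if p = p0 then v else 0) else 0) = if C p0 then v else 0 := by
  rw [Finset.sum_congr rfl (fun p _ => show (if C p then (if p = p0 then v else 0) else 0)
      = (if p = p0 then (if C p then v else 0) else 0) by split_ifs <;> rfl)]
  rw [Finset.sum_ite_eq' univ p0 (fun p => if C p then v else 0)]
  simp

lemma abs_coord_le_norm {n : Type} [Fintype n] (z : EuclideanSpace ℝ n) (r : n) :
    |z r| ≤ ‖z‖ := by
  rw [EuclideanSpace.norm_eq]
  have h1 : |z r| = Real.sqrt (‖z r‖ ^ 2) := by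
    rw [Real.sqrt_sq_eq_abs]; simp
  rw [h1]
  apply Real.sqrt_le_sqrt
  exact Finset.single_le_sum (f := fun i => ‖z i‖ ^ 2) (fun i _ => by positivity) (Finset.mem_univ r)

lemma farkas_packing {P ι : Type} [Fintype P] [Fintype ι] [DecidableEq P]
    (Cp : P → Prop) (U : P → ι → Prop) [∀ p, Decidable (Cp p)] [∀ p i, Decidable (U p i)]
    (w : ι → ℝ) (t : ℝ)
    (hdual : ∀ (yι : ι → ℝ) (y0 : ℝ), (∀ i, 0 ≤ yι i) → y0 ≤ 0 →
      (∀ p, Cp p → 0 ≤ (∑ i, if U p i then yι i else 0) + y0) →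
      0 ≤ (∑ i, yι i * w i) + y0 * t)
    {δ : ℝ} (hδ : 0 < δ) :
    ∃ m : P → ℝ, (∀ p, 0 ≤ m p) ∧
      (∀ i, (∑ p, if Cp p ∧ U p i then m p else 0) ≤ w i + δ) ∧
      t - δ ≤ ∑ p, if Cp p then m p else 0 := by
  classical
  set K : ProperCone ℝ (EuclideanSpace ℝ ((P ⊕ ι) ⊕ Unit)) := orthant _ with hK
  set f : EuclideanSpace ℝ ((P ⊕ ι) ⊕ Unit) →L[ℝ] EuclideanSpace ℝ (ι ⊕ Unit) :=
    LinearMap.toContinuousLinearMap (flin Cp U) with hf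
  set b : EuclideanSpace ℝ (ι ⊕ Unit) :=
    WithLp.toLp 2 (fun r => Sum.rec (fun i => w i) (fun _ => t) r : (ι ⊕ Unit) → ℝ) with hb
  have hmem : b ∈ K.map f := by
    rw [ProperCone.relative_hyperplane_separation]
    intro y hy
    have hyA : ∀ x : EuclideanSpace ℝ ((P ⊕ ι) ⊕ Unit), (∀ j, 0 ≤ x j) →
        0 ≤ ⟪flin Cp U x, y⟫_ℝ := by
      intro x hx
      have h1 := (ProperCone.mem_innerDual).1 hy (show x ∈ K from hx)
      rwa [ContinuousLinearMap.adjoint_inner_right] at h1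
    have hyι : ∀ i, 0 ≤ y (Sum.inl i) := by
      intro i0
      have h := hyA (EuclideanSpace.single (Sum.inl (Sum.inr i0)) 1)
        (fun j => by rw [EuclideanSpace.single_apply]; positivity)
      rw [real_inner_eq_sum, Fintype.sum_sum_type] at h
      simpa [flin, EuclideanSpace.single_apply, Finset.sum_ite_eq', ite_mul, mul_ite] using h
    have hy0 : y (Sum.inr ()) ≤ 0 := by
      have h := hyA (EuclideanSpace.single (Sum.inr ()) 1)
        (fun j => by rw [EuclideanSpace.single_apply]; positivity)
      rw [real_inner_eq_sum, Fintype.sum_sum_type] at h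
      simp [flin, EuclideanSpace.single_apply, ite_mul, mul_ite] at h
      linarith
    have hcol : ∀ p : P, Cp p →
        0 ≤ (∑ i, if U p i then y (Sum.inl i) else 0) + y (Sum.inr ()) := by
      intro p0 hp0
      have h := hyA (EuclideanSpace.single (Sum.inl (Sum.inl p0)) 1)
        (fun j => by rw [EuclideanSpace.single_apply]; positivity)
      rw [real_inner_eq_sum, Fintype.sum_sum_type] at h
      have e1 : ∀ i : ι, (flin Cp U (EuclideanSpace.single (Sum.inl (Sum.inl p0)) 1)) (Sum.inl i)
          = if U p0 i then 1 else 0 := by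
        intro i
        show (∑ p : P, if Cp p ∧ U p i then
            (EuclideanSpace.single (Sum.inl (Sum.inl p0)) (1:ℝ)) (Sum.inl (Sum.inl p)) else 0)
          + (EuclideanSpace.single (Sum.inl (Sum.inl p0)) (1:ℝ)) (Sum.inl (Sum.inr i))
          = if U p0 i then 1 else 0
        rw [Finset.sum_congr rfl (fun p _ => show _ = if Cp p ∧ U p i then
            (if p = p0 then (1:ℝ) else 0) else 0 by
          rw [EuclideanSpace.single_apply]; simp)]
        rw [sum_ite_single (fun p => Cp p ∧ U p i) p0 1]
        rw [EuclideanSpace.single_apply]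
        simp [hp0]
      have e2 : (flin Cp U (EuclideanSpace.single (Sum.inl (Sum.inl p0)) 1)) (Sum.inr ()) = 1 := by
        show (∑ p : P, if Cp p then
            (EuclideanSpace.single (Sum.inl (Sum.inl p0)) (1:ℝ)) (Sum.inl (Sum.inl p)) else 0)
          - (EuclideanSpace.single (Sum.inl (Sum.inl p0)) (1:ℝ)) (Sum.inr ()) = 1
        rw [Finset.sum_congr rfl (fun p _ => show _ = if Cp p then
            (if p = p0 then (1:ℝ) else 0) else 0 by
          rw [EuclideanSpace.single_apply]; simp)]
        rw [sum_ite_single Cp p0 1]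
        rw [EuclideanSpace.single_apply]
        simp [hp0]
      rw [Finset.sum_congr rfl (fun i _ => by rw [e1 i])] at h
      simp only [Fintype.sum_unique, e2, one_mul] at h
      calc (0:ℝ) ≤ _ := h
        _ = (∑ i, if U p0 i then y (Sum.inl i) else 0) + y (Sum.inr ()) := by
          congr 1
          exact Finset.sum_congr rfl fun i _ => by split_ifs <;> simp
    have hfin := hdual (fun i => y (Sum.inl i)) (y (Sum.inr ())) hyι hy0 hcol
    rw [real_inner_eq_sum, Fintype.sum_sum_type]
    simp only [hb, Fintype.sum_unique]
    calc (0:ℝ) ≤ (∑ i, y (Sum.inl i) * w i) + y (Sum.inr ()) * t := hfin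
      _ = _ := by simp [mul_comm]
  -- extract an approximate solution
  rw [ProperCone.mem_map, PointedCone.mem_closure, PointedCone.coe_map] at hmem
  obtain ⟨z, hz, hzd⟩ := Metric.mem_closure_iff.1 hmem δ hδ
  obtain ⟨x, hxK, rfl⟩ := hz
  have hx : ∀ j, 0 ≤ x j := hxK
  refine ⟨fun p => x (Sum.inl (Sum.inl p)), fun p => hx _, ?_, ?_⟩
  · intro i
    have hco := abs_coord_le_norm (b - flin Cp U x) (Sum.inl i)
    rw [← dist_eq_norm] at hco
    have h2 : |b (Sum.inl i) - (flin Cp U x) (Sum.inl i)| < δ := by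
      calc |b (Sum.inl i) - (flin Cp U x) (Sum.inl i)| = |(b - flin Cp U x) (Sum.inl i)| := by
            rw [PiLp.sub_apply]
        _ ≤ dist b (flin Cp U x) := hco
        _ < δ := hzd
    have e1 : (flin Cp U x) (Sum.inl i)
        = (∑ p : P, if Cp p ∧ U p i then x (Sum.inl (Sum.inl p)) else 0)
          + x (Sum.inl (Sum.inr i)) := rfl
    have e2 : b (Sum.inl i) = w i := rfl
    rw [e1, e2, abs_lt] at h2
    have := hx (Sum.inl (Sum.inr i))
    linarith [h2.1, h2.2]
  · have hco := abs_coord_le_norm (b - flin Cp U x) (Sum.inr ())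
    rw [← dist_eq_norm] at hco
    have h2 : |b (Sum.inr ()) - (flin Cp U x) (Sum.inr ())| < δ := by
      calc |b (Sum.inr ()) - (flin Cp U x) (Sum.inr ())| = |(b - flin Cp U x) (Sum.inr ())| := by
            rw [PiLp.sub_apply]
        _ ≤ dist b (flin Cp U x) := hco
        _ < δ := hzd
    have e1 : (flin Cp U x) (Sum.inr ())
        = (∑ p : P, if Cp p then x (Sum.inl (Sum.inl p)) else 0) - x (Sum.inr ()) := rfl
    have e2 : b (Sum.inr ()) = t := rfl
    rw [e1, e2, abs_lt] at h2
    have := hx (Sum.inr ())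
    linarith [h2.1, h2.2]

lemma psi_sum {ι W : Type} [Fintype ι] [DecidableEq ι] (HA : Finset (W × W))
    (ψ : W × W → ι) (hinj : Set.InjOn ψ ↑HA) (g : ι → ℝ)
    [∀ i : ι, Decidable (∃ a ∈ HA, ψ a = i)] :
    ∑ i : ι, (if ∃ a ∈ HA, ψ a = i then g i else 0) = ∑ a ∈ HA, g (ψ a) := by
  classical
  rw [← Finset.sum_filter]
  have himg : filter (fun i => ∃ a ∈ HA, ψ a = i) univ = HA.image ψ := by
    ext i; simp [Finset.mem_image]
  rw [himg, Finset.sum_image (fun a ha b hb h => hinj ha hb h)]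

lemma sum_ite_inst {α : Type} [Fintype α] (C : α → Prop) (inst1 inst2 : ∀ p, Decidable (C p))
    (f : α → ℝ) :
    (∑ p, @ite ℝ (C p) (inst1 p) (f p) 0) = ∑ p, @ite ℝ (C p) (inst2 p) (f p) 0 :=
  Finset.sum_congr rfl fun p _ => by rw [Subsingleton.elim (inst1 p) (inst2 p)]

lemma weak_duality {V ι W : Type} [Fintype V] [Fintype ι] [Fintype W]
    [DecidableEq W] [DecidableEq ι] (HA : Finset (W × W)) (src dst : ι → V)
    (E' : Finset ι) (w : ι → ℝ) (c : ι → ℝ) (hc0 : ∀ i, 0 ≤ c i)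
    (hcov : ∀ φ ψ, IsHCopy HA src dst E' φ ψ → 1 ≤ ∑ a ∈ HA, c (ψ a))
    (m : (W → V) × (W × W → ι) → ℝ) (hm : IsFracPacking HA src dst E' w m) :
    packingValue m ≤ ∑ i ∈ E', w i * c i := by
  classical
  obtain ⟨hm0, hmcp, hmld⟩ := hm
  have step1 : packingValue m ≤ ∑ p : (W → V) × (W × W → ι), m p * ∑ a ∈ HA, c (p.2 a) := by
    refine Finset.sum_le_sum fun p _ => ?_
    by_cases hp : IsHCopy HA src dst E' p.1 p.2
    · have := hcov p.1 p.2 hp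
      nlinarith [hm0 p]
    · simp [hmcp p hp]
  have step2 : ∑ p : (W → V) × (W × W → ι), m p * ∑ a ∈ HA, c (p.2 a)
      = ∑ p : (W → V) × (W × W → ι), ∑ i : ι,
          (if ∃ a ∈ HA, p.2 a = i then m p * c i else 0) := by
    refine Finset.sum_congr rfl fun p _ => ?_
    by_cases hp : IsHCopy HA src dst E' p.1 p.2
    · rw [Finset.mul_sum, ← psi_sum HA p.2 hp.2.1 (fun i => m p * c i)]
    · simp [hmcp p hp]
  have step3 : ∑ p : (W → V) × (W × W → ι), ∑ i : ι,
          (if ∃ a ∈ HA, p.2 a = i then m p * c i else 0)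
      = ∑ i : ι, c i * ∑ p : (W → V) × (W × W → ι),
          (if ∃ a ∈ HA, p.2 a = i then m p else 0) := by
    rw [Finset.sum_comm]
    refine Finset.sum_congr rfl fun i _ => ?_
    rw [Finset.mul_sum]
    refine Finset.sum_congr rfl fun p _ => ?_
    split_ifs <;> ring
  have step4 : ∑ i : ι, c i * ∑ p : (W → V) × (W × W → ι),
          (if ∃ a ∈ HA, p.2 a = i then m p else 0) ≤ ∑ i ∈ E', w i * c i := by
    rw [← Finset.sum_subset (Finset.subset_univ E')]
    · exact Finset.sum_le_sum fun i hi => by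
        rw [mul_comm (w i) (c i)]
        refine mul_le_mul_of_nonneg_left (le_of_eq_of_le ?_ (hmld i hi)) (hc0 i)
        exact sum_ite_inst _ _ _ m
    · intro i _ hi
      have hz : ∀ p : (W → V) × (W × W → ι),
          (if ∃ a ∈ HA, p.2 a = i then m p else 0) = 0 := by
        intro p
        split_ifs with h
        · by_cases hp : IsHCopy HA src dst E' p.1 p.2
          · obtain ⟨a, ha, hai⟩ := h
            exact absurd ((hp.2.2 a ha).1) (by rw [hai]; exact fun hmem => hi hmem)
          · exact hmcp p hp
        · rfl
      rw [Finset.sum_eq_zero fun p _ => hz p, mul_zero]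
  calc packingValue m ≤ _ := step1
    _ = _ := step2
    _ = _ := step3
    _ ≤ _ := step4

lemma arith_aux (t ε wp n C δ θ q val : ℝ) (ht0 : 0 ≤ t) (hwp0 : 0 < wp) (hn0 : 0 ≤ n)
    (hε : 0 < ε) (hC : C = n + 1 + t / wp) (hδdef : δ = ε / (C + 1)) (hθdef : θ = wp / (wp + δ))
    (hq : q = t / wp) (hval : t - (n + 1) * δ ≤ val) : t - ε ≤ θ * val := by
  have hC0 : 0 ≤ C := by rw [hC]; positivity
  have hδ : 0 < δ := by rw [hδdef]; positivity
  have hθ0 : 0 < θ := by rw [hθdef]; positivity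
  have hθ1 : θ ≤ 1 := by rw [hθdef, div_le_one (by positivity)]; linarith
  have hq0 : 0 ≤ q := by rw [hq]; positivity
  have hqe : q * wp = t := by rw [hq]; exact div_mul_cancel₀ t hwp0.ne'
  have hθeq : θ * (wp + δ) = wp := by rw [hθdef]; field_simp
  have hδC : δ * C ≤ ε := by
    rw [hδdef, div_mul_eq_mul_div, div_le_iff₀ (by positivity)]
    nlinarith
  have e2 : (1-θ)*t = δ*q - (1-θ)*q*δ := by
    have e0 : (1-θ)*(wp+δ) = δ := by linarith [hθeq]
    calc (1-θ)*t = (1-θ)*(q*wp) := by rw [hqe]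
      _ = q*((1-θ)*(wp+δ)) - (1-θ)*q*δ := by ring
      _ = q*δ - (1-θ)*q*δ := by rw [e0]
      _ = δ*q - (1-θ)*q*δ := by ring
  have hstep : t - θ * t ≤ δ * q := by
    nlinarith [mul_nonneg (mul_nonneg (sub_nonneg.2 hθ1) hq0) hδ.le]
  have h1 : θ * ((n+1)*δ) ≤ (n+1)*δ := by
    nlinarith [mul_nonneg (mul_nonneg (sub_nonneg.2 hθ1) (by positivity : (0:ℝ) ≤ n+1)) hδ.le]
  have h2 : δ * q + (n+1)*δ = δ * C := by rw [hC, hq]; ring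
  have hfin : t - ε ≤ θ * (t - (n+1)*δ) := by nlinarith
  have hmono : θ * (t - (n+1)*δ) ≤ θ * val := mul_le_mul_of_nonneg_left hval hθ0.le
  linarith

lemma exists_packing_ge {V ι W : Type} [Fintype V] [Fintype ι] [Fintype W]
    [DecidableEq W] [DecidableEq ι] [DecidableEq V]
    (HA : Finset (W × W)) (src dst : ι → V) (E : Finset ι) (w : ι → ℝ)
    (hw : ∀ i, 0 ≤ w i)
    (c : ι → ℝ) (hc : IsFracCover HA src dst E c)
    (hcopt : ∀ c', IsFracCover HA src dst E c' → coverValue E w c ≤ coverValue E w c')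
    {ε : ℝ} (hε : 0 < ε) :
    ∃ M, IsFracPacking HA src dst E w M ∧ coverValue E w c - ε ≤ packingValue M := by
  classical
  set t := coverValue E w c with ht
  have ht0 : 0 ≤ t := Finset.sum_nonneg fun i _ => mul_nonneg (hw i) (hc.1 i).1
  set S := E.filter (fun i => 0 < w i) with hS
  set wp : ℝ := if h : S.Nonempty then S.inf' h w else 1 with hwp
  have hwp0 : 0 < wp := by
    rw [hwp]; split_ifs with h
    · rw [Finset.lt_inf'_iff]; intro i hi; exact (Finset.mem_filter.1 hi).2
    · norm_num
  have hwple : ∀ i ∈ E, 0 < w i → wp ≤ w i := by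
    intro i hi hpos
    have hiS : i ∈ S := Finset.mem_filter.2 ⟨hi, hpos⟩
    rw [hwp, dif_pos ⟨i, hiS⟩]
    exact Finset.inf'_le w hiS
  set n : ℝ := (Fintype.card ι : ℝ) with hn
  have hn0 : 0 ≤ n := by positivity
  set C : ℝ := (n + 1) + t / wp with hC
  have hC0 : 0 ≤ C := by positivity
  set δ : ℝ := ε / (C + 1) with hδdef
  have hδ : 0 < δ := by positivity
  set P := (W → V) × (W × W → ι) with hP
  set Cp : P → Prop := fun p => IsHCopy HA src dst E p.1 p.2 with hCpdef
  set U : P → ι → Prop := fun p i => ∃ a ∈ HA, p.2 a = i with hUdef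
  have hdual : ∀ (yι : ι → ℝ) (y0 : ℝ), (∀ i, 0 ≤ yι i) → y0 ≤ 0 →
      (∀ p, Cp p → 0 ≤ (∑ i, if U p i then yι i else 0) + y0) →
      0 ≤ (∑ i, yι i * w i) + y0 * t := by
    intro yι y0 hyι hy0 hcol
    rcases hy0.lt_or_eq with hlt | heq
    · set lam : ℝ := -y0 with hlam
      have hlam0 : 0 < lam := by rw [hlam]; linarith
      set c' : ι → ℝ := fun i => min (yι i / lam) 1 with hc'
      have hc'cov : IsFracCover HA src dst E c' := by
        constructor
        · intro i
          exact ⟨le_min (div_nonneg (hyι i) hlam0.le) zero_le_one, min_le_right _ _⟩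
        · intro φ ψ hcopy
          have h0 := hcol (φ, ψ) hcopy
          have hconv : (∑ i, if U (φ, ψ) i then yι i else 0) = ∑ a ∈ HA, yι (ψ a) :=
            (sum_ite_inst _ _ _ yι).trans (psi_sum HA ψ hcopy.2.1 yι)
          rw [hconv] at h0
          have hsum : lam ≤ ∑ a ∈ HA, yι (ψ a) := by rw [hlam]; linarith
          by_cases hex : ∃ a₀ ∈ HA, (1:ℝ) ≤ yι (ψ a₀) / lam
          · obtain ⟨a₀, ha₀, hge⟩ := hex
            have h1 : c' (ψ a₀) = 1 := min_eq_right hge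
            calc (1:ℝ) = c' (ψ a₀) := h1.symm
              _ ≤ ∑ a ∈ HA, c' (ψ a) := Finset.single_le_sum
                  (f := fun a => c' (ψ a))
                  (fun a _ => le_min (div_nonneg (hyι _) hlam0.le) zero_le_one) ha₀
          · push_neg at hex
            have heq2 : ∑ a ∈ HA, c' (ψ a) = (∑ a ∈ HA, yι (ψ a)) / lam := by
              rw [Finset.sum_div]
              refine Finset.sum_congr rfl fun a ha => ?_
              exact min_eq_left (hex a ha).le
            rw [heq2]
            exact (one_le_div hlam0).2 hsum
      have h1 := hcopt c' hc'cov
      have h2 : coverValue E w c' ≤ ∑ i ∈ E, w i * (yι i / lam) :=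
        Finset.sum_le_sum fun i _ => mul_le_mul_of_nonneg_left (min_le_left _ _) (hw i)
      have h3 : ∑ i ∈ E, w i * (yι i / lam) ≤ ∑ i : ι, w i * (yι i / lam) :=
        Finset.sum_le_sum_of_subset_of_nonneg (Finset.subset_univ E)
          (fun i _ _ => mul_nonneg (hw i) (div_nonneg (hyι i) hlam0.le))
      have h4 : ∑ i : ι, w i * (yι i / lam) = (∑ i : ι, yι i * w i) / lam := by
        rw [Finset.sum_div]
        exact Finset.sum_congr rfl fun i _ => by ring
      have h5 : t ≤ (∑ i : ι, yι i * w i) / lam := by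
        calc t ≤ coverValue E w c' := h1
          _ ≤ _ := h2
          _ ≤ _ := h3
          _ = _ := h4
      have h6 : t * lam ≤ ∑ i : ι, yι i * w i := (le_div_iff₀ hlam0).1 h5
      have h7 : y0 * t = -(t * lam) := by rw [hlam]; ring
      linarith
    · have : (0:ℝ) ≤ ∑ i : ι, yι i * w i :=
        Finset.sum_nonneg fun i _ => mul_nonneg (hyι i) (hw i)
      rw [heq]
      simpa using this
  obtain ⟨m, hm0, hmld, hmval⟩ := farkas_packing Cp U w t hdual hδ
  -- cleanup: kill zero-weight arcs, scale
  set E0 := E.filter (fun i => w i = 0) with hE0def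
  set kil : P → Prop := fun p => ∃ i ∈ E0, U p i with hkil
  set m' : P → ℝ := fun p => if kil p then 0 else m p with hm'def
  have hm'0 : ∀ p, 0 ≤ m' p := fun p => by
    simp only [hm'def]; split_ifs; exacts [le_refl 0, hm0 p]
  have hm'le : ∀ p, m' p ≤ m p := fun p => by
    simp only [hm'def]; split_ifs; exacts [hm0 p, le_refl _]
  set load' : ι → ℝ := fun i => ∑ p, if Cp p ∧ U p i then m' p else 0 with hload'def
  have hload'le : ∀ i, load' i ≤ w i + δ := by
    intro i
    refine le_trans (Finset.sum_le_sum fun p _ => ?_) (hmld i)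
    split_ifs
    · exact hm'le p
    · exact le_refl 0
  have hload'0 : ∀ i ∈ E0, load' i = 0 := by
    intro i hi
    refine Finset.sum_eq_zero fun p _ => ?_
    split_ifs with h
    · simp only [hm'def]
      rw [if_pos ⟨i, hi, h.2⟩]
    · rfl
  have hkillcost : (∑ p, if Cp p then m p else 0) - (∑ p, if Cp p then m' p else 0) ≤ n * δ := by
    have e1 : (∑ p, if Cp p then m p else 0) - (∑ p, if Cp p then m' p else 0)
        = ∑ p, if Cp p ∧ kil p then m p else 0 := by
      rw [← Finset.sum_sub_distrib]
      refine Finset.sum_congr rfl fun p _ => ?_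
      by_cases h1 : Cp p <;> by_cases h2 : kil p <;>
        simp [h1, h2, hm'def]
    rw [e1]
    have e2 : (∑ p, if Cp p ∧ kil p then m p else 0)
        ≤ ∑ p, ∑ i ∈ E0, (if Cp p ∧ U p i then m p else 0) := by
      refine Finset.sum_le_sum fun p _ => ?_
      split_ifs with h
      · obtain ⟨i₀, hi₀, hU₀⟩ := h.2
        have hterm : (if Cp p ∧ U p i₀ then m p else 0) = m p := if_pos ⟨h.1, hU₀⟩
        calc m p = _ := hterm.symm
          _ ≤ _ := Finset.single_le_sum (f := fun i => if Cp p ∧ U p i then m p else 0)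
              (fun i _ => by split_ifs; exacts [hm0 p, le_refl 0]) hi₀
      · exact Finset.sum_nonneg fun i _ => by split_ifs; exacts [hm0 p, le_refl 0]
    have e3 : (∑ p, ∑ i ∈ E0, (if Cp p ∧ U p i then m p else 0))
        = ∑ i ∈ E0, ∑ p, (if Cp p ∧ U p i then m p else 0) := Finset.sum_comm
    have e4 : (∑ i ∈ E0, ∑ p, (if Cp p ∧ U p i then m p else 0)) ≤ ∑ i ∈ E0, δ := by
      refine Finset.sum_le_sum fun i hi => ?_
      have hwi : w i = 0 := (Finset.mem_filter.1 hi).2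
      have h := hmld i
      rw [hwi] at h
      linarith
    have e5 : (∑ _i ∈ E0, (δ:ℝ)) = E0.card * δ := by rw [Finset.sum_const, nsmul_eq_mul]
    have e6 : (E0.card : ℝ) ≤ n := by
      rw [hn]; exact_mod_cast Finset.card_le_univ E0
    calc (∑ p, if Cp p ∧ kil p then m p else 0) ≤ _ := e2
      _ = _ := e3
      _ ≤ _ := e4
      _ = E0.card * δ := e5
      _ ≤ n * δ := by nlinarith
  set θ : ℝ := wp / (wp + δ) with hθdef
  have hθ0 : 0 < θ := by rw [hθdef]; positivity
  have hθ1 : θ ≤ 1 := by rw [hθdef, div_le_one (by positivity)]; linarith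
  set M : P → ℝ := fun p => if Cp p then θ * m' p else 0 with hMdef
  refine ⟨M, ⟨?_, ?_, ?_⟩, ?_⟩
  · intro p; simp only [hMdef]; split_ifs
    exacts [mul_nonneg hθ0.le (hm'0 p), le_refl 0]
  · intro p hp
    simp only [hMdef, hCpdef]
    exact if_neg hp
  · intro i hi
    have key : (∑ p, if U p i then M p else 0) = θ * load' i := by
      simp only [hload'def]
      rw [Finset.mul_sum]
      refine Finset.sum_congr rfl fun p _ => ?_
      simp only [hMdef]
      by_cases h1 : U p i <;> by_cases h2 : Cp p <;> simp [h1, h2]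
    have hgoal : (∑ p, if U p i then M p else 0) ≤ w i := by
      rw [key]
      by_cases hwi : w i = 0
      · have hmem : i ∈ E0 := Finset.mem_filter.2 ⟨hi, hwi⟩
        rw [hload'0 i hmem, mul_zero, hwi]
      · have hpos : 0 < w i := lt_of_le_of_ne (hw i) (Ne.symm hwi)
        have h1 : θ * load' i ≤ θ * (w i + δ) :=
          mul_le_mul_of_nonneg_left (hload'le i) hθ0.le
        have h2 : θ * (w i + δ) ≤ w i := by
          rw [hθdef, div_mul_eq_mul_div, div_le_iff₀ (by positivity)]
          have := hwple i hi hpos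
          nlinarith
        linarith
    simp only [hUdef] at hgoal
    exact le_of_eq_of_le (sum_ite_inst (fun p : P => ∃ a ∈ HA, p.2 a = i) _ _ M) hgoal
  · have hval' : t - (n + 1) * δ ≤ ∑ p, if Cp p then m' p else 0 := by
      linarith [hmval, hkillcost]
    have hpv : packingValue M = θ * ∑ p, if Cp p then m' p else 0 := by
      simp only [packingValue]
      rw [Finset.mul_sum]
      refine Finset.sum_congr rfl fun p _ => ?_
      simp only [hMdef]
      split_ifs <;> simp
    rw [hpv]
    exact arith_aux t ε wp n C δ θ (t/wp) _ ht0 hwp0 hn0 hε hC hδdef hθdef rfl hval'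

/-- If `c` is an optimal fractional `H`-cover of `D`, `α > 0`, `e` is an arc with
`c(e) ≥ α`, and `τ_H(D \ e) ≤ α⁻¹ ν*_H(D \ e)`, then `τ_H(D) ≤ α⁻¹ ν*_H(D)`.
Here `ν` and `νe` denote `ν*_H(D)` and `ν*_H(D \ e)` (maximum fractional packing
values), and the `τ` inequalities are expressed by exhibiting integral covers. -/
theorem stmt_10 {V ι W : Type} [Fintype V] [Fintype ι] [Fintype W]
    [DecidableEq W] [DecidableEq ι] [DecidableEq V]
    (HA : Finset (W × W)) (src dst : ι → V) (E : Finset ι) (w : ι → ℝ)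
    (hw : ∀ i, 0 ≤ w i) (α : ℝ) (hα : 0 < α)
    (c : ι → ℝ) (hc : IsFracCover HA src dst E c)
    (hcopt : ∀ c', IsFracCover HA src dst E c' → coverValue E w c ≤ coverValue E w c')
    (e : ι) (he : e ∈ E) (hce : α ≤ c e)
    (ν νe : ℝ)
    (hν : IsGreatest {x | ∃ m : (W → V) × (W × W → ι) → ℝ,
      IsFracPacking HA src dst E w m ∧ x = packingValue m} ν)
    (hνe : IsGreatest {x | ∃ m : (W → V) × (W × W → ι) → ℝ,
      IsFracPacking HA src dst (E.erase e) w m ∧ x = packingValue m} νe)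
    (hτe : ∃ F ⊆ E.erase e, IsCoverSet HA src dst (E.erase e) F ∧
      ∑ i ∈ F, w i ≤ α⁻¹ * νe) :
    ∃ F ⊆ E, IsCoverSet HA src dst E F ∧ ∑ i ∈ F, w i ≤ α⁻¹ * ν := by
  classical
  obtain ⟨F, hFsub, hFcov, hFw⟩ := hτe
  have heF : e ∉ F := fun hmem => (Finset.mem_erase.1 (hFsub hmem)).1 rfl
  refine ⟨insert e F, ?_, ?_, ?_⟩
  · intro i hi
    rcases Finset.mem_insert.1 hi with rfl | hiF
    · exact he
    · exact (Finset.erase_subset e E) (hFsub hiF)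
  · intro φ ψ hcopy
    by_cases hsome : ∃ a ∈ HA, ψ a = e
    · obtain ⟨a, ha, hae⟩ := hsome
      exact ⟨a, ha, by rw [hae]; exact Finset.mem_insert_self e F⟩
    · have hcopy' : IsHCopy HA src dst (E.erase e) φ ψ := by
        refine ⟨hcopy.1, hcopy.2.1, fun a ha => ?_⟩
        obtain ⟨h1, h2, h3⟩ := hcopy.2.2 a ha
        exact ⟨Finset.mem_erase.2 ⟨fun h => hsome ⟨a, ha, h⟩, h1⟩, h2, h3⟩
      obtain ⟨a, ha, haF⟩ := hFcov φ ψ hcopy'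
      exact ⟨a, ha, Finset.mem_insert_of_mem haF⟩
  · rw [Finset.sum_insert heF]
    have ht_nu : coverValue E w c ≤ ν := by
      refine le_of_forall_pos_le_add fun ε hε => ?_
      obtain ⟨M, hM, hMv⟩ := exists_packing_ge HA src dst E w hw c hc hcopt hε
      have hle : packingValue M ≤ ν := hν.2 ⟨M, hM, rfl⟩
      linarith
    have hνe_le : νe ≤ coverValue E w c - w e * c e := by
      obtain ⟨me, hme, hmeval⟩ := hνe.1
      have hcov' : ∀ φ ψ, IsHCopy HA src dst (E.erase e) φ ψ → 1 ≤ ∑ a ∈ HA, c (ψ a) := by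
        intro φ ψ hcopy
        refine hc.2 φ ψ ⟨hcopy.1, hcopy.2.1, fun a ha => ?_⟩
        obtain ⟨h1, h2, h3⟩ := hcopy.2.2 a ha
        exact ⟨(Finset.erase_subset e E) h1, h2, h3⟩
      have hwd := weak_duality HA src dst (E.erase e) w c (fun i => (hc.1 i).1) hcov' me hme
      rw [Finset.sum_erase_eq_sub he] at hwd
      have hcv : coverValue E w c = ∑ i ∈ E, w i * c i := rfl
      rw [hmeval, hcv]
      exact hwd
    have hwece : α * w e ≤ w e * c e := by nlinarith [hw e, hce, hα.le]
    have hchain : νe + α * w e ≤ ν := by linarith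
    have hinv : α⁻¹ * α = 1 := inv_mul_cancel₀ hα.ne'
    have hmul := mul_le_mul_of_nonneg_left hchain (inv_nonneg.2 hα.le)
    have hexp : α⁻¹ * (νe + α * w e) = α⁻¹ * νe + w e := by
      rw [mul_add, ← mul_assoc, hinv, one_mul]
    linarith [hFw]
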